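/- If $w \in \mathfrak{S}_n$ avoids the pattern $1324$, then $\#\overline{H_L(w)} \geq \#R_w$, i.e., the complement of the left hull of $w$ in $[n] \times [n]$ has at least as many cells as the Rothe diagram of $w$. -/

import Mathlib

/-- The Rothe diagram of a permutation `w`. -/
def rothe {n : ℕ} (w : Equiv.Perm (Fin n)) : Finset (Fin n × Fin n) :=
  Finset.univ.filter (fun p => p.2 < w p.1 ∧ p.1 < w⁻¹ p.2)

/-- The left hull of `w`: the union over all non-inversions `i < j`, `w i < w j`
of the rectangles `{(k,ℓ) : w i ≤ k ≤ w j, i ≤ ℓ ≤ j}`. -/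
def leftHull {n : ℕ} (w : Equiv.Perm (Fin n)) : Finset (Fin n × Fin n) :=
  Finset.univ.filter (fun c => ∃ i j : Fin n, i < j ∧ w i < w j ∧
    w i ≤ c.1 ∧ c.1 ≤ w j ∧ i ≤ c.2 ∧ c.2 ≤ j)

/-- `w` avoids the pattern `1324`. -/
def avoids1324 {n : ℕ} (w : Equiv.Perm (Fin n)) : Prop :=
  ¬ ∃ i₁ i₂ i₃ i₄ : Fin n, i₁ < i₂ ∧ i₂ < i₃ ∧ i₃ < i₄ ∧
      w i₁ < w i₃ ∧ w i₃ < w i₂ ∧ w i₂ < w i₄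

theorem stmt_15 {n : ℕ} (w : Equiv.Perm (Fin n)) (hw : avoids1324 w) :
    (rothe w).card ≤ ((Finset.univ : Finset (Fin n × Fin n)) \ leftHull w).card := by
  classical
  set f : Fin n × Fin n → Fin n × Fin n := fun p =>
    if ∀ i, i ≤ p.1 → p.2 < w i then (p.2, p.1) else (w p.1, w⁻¹ p.2) with hfdef
  have hmemR : ∀ p, p ∈ rothe w → p.2 < w p.1 ∧ p.1 < w⁻¹ p.2 := by
    intro p hp
    simpa [rothe] using hp
  -- key: non-left-saturated implies right-saturated (else 1324 pattern)
  have key : ∀ p ∈ rothe w, (¬ ∀ i, i ≤ p.1 → p.2 < w i) →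
      ∀ j, w⁻¹ p.2 ≤ j → w j < w p.1 := by
    intro p hp hL
    by_contra hR
    push_neg at hL hR
    obtain ⟨i, hi, hwi⟩ := hL
    obtain ⟨j, hj, hwj⟩ := hR
    obtain ⟨h1, h2⟩ := hmemR p hp
    have hwinv : w (w⁻¹ p.2) = p.2 := Equiv.apply_symm_apply w p.2
    have hi1 : i < p.1 := by
      rcases lt_or_eq_of_le hi with h | h
      · exact h
      · exfalso; rw [h] at hwi; exact absurd h1 (not_lt.mpr hwi)
    have hwi' : w i < p.2 := by
      rcases lt_or_eq_of_le hwi with h | h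
      · exact h
      · exfalso
        have : i = w⁻¹ p.2 := w.injective (h.trans hwinv.symm)
        rw [this] at hi
        exact absurd (lt_of_lt_of_le h2 hi) (lt_irrefl p.1)
    have hj1 : w⁻¹ p.2 < j := by
      rcases lt_or_eq_of_le hj with h | h
      · exact h
      · exfalso; rw [← h, hwinv] at hwj; exact absurd h1 (not_lt.mpr hwj)
    have hwj' : w p.1 < w j := by
      rcases lt_or_eq_of_le hwj with h | h
      · exact h
      · exfalso
        have : p.1 = j := w.injective h
        rw [← this] at hj1
        exact absurd (lt_trans h2 hj1) (lt_irrefl p.1)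
    exact hw ⟨i, p.1, w⁻¹ p.2, j, hi1, h2, hj1, by rw [hwinv]; exact hwi',
      by rw [hwinv]; exact h1, hwj'⟩
  apply Finset.card_le_card_of_injOn f
  · -- maps into the complement
    intro p hp
    obtain ⟨h1, h2⟩ := hmemR p hp
    have hwinv : w (w⁻¹ p.2) = p.2 := Equiv.apply_symm_apply w p.2
    simp only [Finset.mem_coe, Finset.mem_sdiff, Finset.mem_univ, true_and]
    by_cases hL : ∀ i, i ≤ p.1 → p.2 < w i
    · have hfp : f p = (p.2, p.1) := by simp only [hfdef]; rw [if_pos hL]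
      rw [hfp]
      simp only [leftHull, Finset.mem_filter, Finset.mem_univ, true_and]
      rintro ⟨a, b, hab, hwab, ha1, hb1, ha2, hb2⟩
      exact absurd ha1 (not_le.mpr (hL a ha2))
    · have hfp : f p = (w p.1, w⁻¹ p.2) := by simp only [hfdef]; rw [if_neg hL]
      have hRs := key p hp hL
      rw [hfp]
      simp only [leftHull, Finset.mem_filter, Finset.mem_univ, true_and]
      rintro ⟨a, b, hab, hwab, ha1, hb1, ha2, hb2⟩
      exact absurd hb1 (not_le.mpr (hRs b hb2))
  · -- injective on rothe
    intro p hp q hq heq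
    obtain ⟨hp1, hp2⟩ := hmemR p hp
    obtain ⟨hq1, hq2⟩ := hmemR q hq
    by_cases hLp : ∀ i, i ≤ p.1 → p.2 < w i <;>
      by_cases hLq : ∀ i, i ≤ q.1 → q.2 < w i
    · have h1 : f p = (p.2, p.1) := by simp only [hfdef]; rw [if_pos hLp]
      have h2 : f q = (q.2, q.1) := by simp only [hfdef]; rw [if_pos hLq]
      rw [h1, h2, Prod.mk.injEq] at heq
      exact Prod.ext heq.2 heq.1
    · -- mixed: contradiction
      exfalso
      have h1 : f p = (p.2, p.1) := by simp only [hfdef]; rw [if_pos hLp]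
      have h2 : f q = (w q.1, w⁻¹ q.2) := by simp only [hfdef]; rw [if_neg hLq]
      rw [h1, h2, Prod.mk.injEq] at heq
      obtain ⟨e1, e2⟩ := heq
      have : w p.1 = q.2 := by rw [e2]; exact Equiv.apply_symm_apply w q.2
      rw [← this] at hq1
      rw [e1] at hp1
      exact absurd (lt_trans hp1 hq1) (lt_irrefl _)
    · exfalso
      have h1 : f p = (w p.1, w⁻¹ p.2) := by simp only [hfdef]; rw [if_neg hLp]
      have h2 : f q = (q.2, q.1) := by simp only [hfdef]; rw [if_pos hLq]
      rw [h1, h2, Prod.mk.injEq] at heq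
      obtain ⟨e1, e2⟩ := heq
      have : w q.1 = p.2 := by rw [← e2]; exact Equiv.apply_symm_apply w p.2
      rw [← this] at hp1
      rw [← e1] at hq1
      exact absurd (lt_trans hp1 hq1) (lt_irrefl _)
    · have h1 : f p = (w p.1, w⁻¹ p.2) := by simp only [hfdef]; rw [if_neg hLp]
      have h2 : f q = (w q.1, w⁻¹ q.2) := by simp only [hfdef]; rw [if_neg hLq]
      rw [h1, h2, Prod.mk.injEq] at heq
      obtain ⟨e1, e2⟩ := heq
      exact Prod.ext (w.injective e1) (w⁻¹.injective e2)
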